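/- Let c ∈ (−1,1), ε ∈ [0, 1+|c|), and let T ∈ B(H,K) be a nonzero (ε,c)-angle preserving bounded linear map. Then T is injective and √((1+|c|)(1−|c|−ε)/((1−|c|)(1+|c|+ε)))·‖T‖·‖x‖ ≤ ‖Tx‖ ≤ ‖T‖·‖x‖ for all x ∈ H. -/

import Mathlib

set_option maxHeartbeats 1000000

open scoped RealInnerProductSpace

/-- The minimum modulus `[T]` of a bounded linear map: the infimum of `‖T x‖`
over unit vectors `x`. -/
noncomputable def minMod {H K : Type*} [NormedAddCommGroup H] [InnerProductSpace ℝ H]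
    [NormedAddCommGroup K] [InnerProductSpace ℝ K] (T : H →L[ℝ] K) : ℝ :=
  ⨅ x : {x : H // ‖x‖ = 1}, ‖T x‖

/-- `T` is `(ε, c)`-angle preserving. -/
def AnglePres {H K : Type*} [NormedAddCommGroup H] [InnerProductSpace ℝ H]
    [NormedAddCommGroup K] [InnerProductSpace ℝ K] (c ε : ℝ) (T : H →L[ℝ] K) : Prop :=
  ∀ x y : H, ⟪x, y⟫ = c * ‖x‖ * ‖y‖ →
    |⟪T x, T y⟫ - c * ‖T x‖ * ‖T y‖| ≤ ε * ‖T x‖ * ‖T y‖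

/-- `ε̂(T, c)`: the smallest `ε` for which `T` is `(ε, c)`-angle preserving. -/
noncomputable def epsHat {H K : Type*} [NormedAddCommGroup H] [InnerProductSpace ℝ H]
    [NormedAddCommGroup K] [InnerProductSpace ℝ K] (c : ℝ) (T : H →L[ℝ] K) : ℝ :=
  sInf {ε : ℝ | ε ∈ Set.Icc 0 (1 + |c|) ∧ AnglePres c ε T}

section Aux
variable {H K : Type*} [NormedAddCommGroup H] [InnerProductSpace ℝ H]
    [NormedAddCommGroup K] [InnerProductSpace ℝ K]

lemma inner_comb (x y : H) (p q r s : ℝ) :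
    ⟪p•x + q•y, r•x + s•y⟫ = p*r*⟪x,x⟫ + p*s*⟪x,y⟫ + q*r*⟪y,x⟫ + q*s*⟪y,y⟫ := by
  simp [inner_add_left, inner_add_right, real_inner_smul_left, real_inner_smul_right]
  ring

lemma norm_eq_one_of {v : H} (h : ⟪v,v⟫ = (1:ℝ)) : ‖v‖ = 1 := by
  have h2 := real_inner_self_eq_norm_mul_norm v
  nlinarith [norm_nonneg v]

lemma inj_aux {c ε : ℝ} (hc1 : -1 < c) (hc2 : c < 1) (hε0 : 0 ≤ ε) (hε1 : ε < 1 + |c|)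
    {T : H →L[ℝ] K} (hT : T ≠ 0) (hpres : AnglePres c ε T) {x : H} (hx : T x = 0) :
    x = 0 := by
  by_contra hx0
  -- unit vector x' in the kernel
  set x' : H := ‖x‖⁻¹ • x with hx'def
  have hxn : (0:ℝ) < ‖x‖ := norm_pos_iff.mpr hx0
  have hTx' : T x' = 0 := by simp [hx'def, hx]
  have hxu : ‖x'‖ = 1 := norm_smul_inv_norm hx0
  have hx'1 : ⟪x',x'⟫ = (1:ℝ) := by
    rw [real_inner_self_eq_norm_mul_norm, hxu]; norm_num
  -- a vector with nonzero image
  obtain ⟨z, hz⟩ : ∃ z, T z ≠ 0 := by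
    by_contra hcon
    push_neg at hcon
    exact hT (ContinuousLinearMap.ext fun z => by simp [hcon z])
  set w : H := z - ⟪x',z⟫ • x' with hwdef
  have hTw : T w = T z := by simp [hwdef, hTx']
  have hw0 : w ≠ 0 := fun h => hz (by rw [← hTw, h, map_zero])
  have hwx : ⟪x',w⟫ = (0:ℝ) := by
    simp [hwdef, inner_sub_right, real_inner_smul_right, hx'1, hxu]
  set y : H := ‖w‖⁻¹ • w with hydef
  have hwn : (0:ℝ) < ‖w‖ := norm_pos_iff.mpr hw0
  have hyu : ‖y‖ = 1 := norm_smul_inv_norm hw0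
  have hy1 : ⟪y,y⟫ = (1:ℝ) := by
    rw [real_inner_self_eq_norm_mul_norm, hyu]; norm_num
  have hxy : ⟪x',y⟫ = (0:ℝ) := by simp [hydef, real_inner_smul_right, hwx]
  have hyx : ⟪y,x'⟫ = (0:ℝ) := by rw [real_inner_comm]; exact hxy
  have hTy : T y ≠ 0 := by
    simp only [hydef, map_smul]
    exact smul_ne_zero (inv_ne_zero (ne_of_gt hwn)) (hTw ▸ hz)
  have hb : (0:ℝ) < ‖T y‖ := norm_pos_iff.mpr hTy
  set p : ℝ := Real.sqrt ((1+c)/2) with hpdef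
  set q : ℝ := Real.sqrt ((1-c)/2) with hqdef
  have hp2 : p^2 = (1+c)/2 := Real.sq_sqrt (by linarith)
  have hq2 : q^2 = (1-c)/2 := Real.sq_sqrt (by linarith)
  have hp0 : 0 < p := Real.sqrt_pos.mpr (by linarith)
  have hq0 : 0 < q := Real.sqrt_pos.mpr (by linarith)
  -- generic claim: for unit vectors u = a•x'+b•y, v = r•x'+s•y with
  -- a²+b²=1, r²+s²=1 and a*r+b*s = c, the hpres condition gives info
  have key : ∀ a b r s : ℝ, a^2+b^2 = 1 → r^2+s^2 = 1 → a*r + b*s = c →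
      |b*s - c*(abs b * abs s)| * ‖T y‖^2 ≤ ε * (abs b * abs s) * ‖T y‖^2 := by
    intro a b r s hab hrs hc
    set u : H := a•x' + b•y with hudef
    set v : H := r•x' + s•y with hvdef
    have hu1 : ‖u‖ = 1 := norm_eq_one_of (by
      rw [hudef, inner_comb, hx'1, hy1, hxy, hyx]; linear_combination hab)
    have hv1 : ‖v‖ = 1 := norm_eq_one_of (by
      rw [hvdef, inner_comb, hx'1, hy1, hxy, hyx]; linear_combination hrs)
    have huv : ⟪u,v⟫ = c * ‖u‖ * ‖v‖ := by
      rw [hudef, hvdef, inner_comb, hx'1, hy1, hxy, hyx, hu1, hv1]; linear_combination hc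
    have h := hpres u v huv
    have hTu : T u = b • T y := by simp [hudef, hTx']
    have hTv : T v = s • T y := by simp [hvdef, hTx']
    rw [hTu, hTv, real_inner_smul_left, real_inner_smul_right,
      real_inner_self_eq_norm_mul_norm, norm_smul, norm_smul, Real.norm_eq_abs,
      Real.norm_eq_abs] at h
    have ht : |b*s - c*(abs b * abs s)| * ‖T y‖^2
        = |b * (s * (‖T y‖ * ‖T y‖)) - c * (|b| * ‖T y‖) * (|s| * ‖T y‖)| := by
      rw [← abs_of_nonneg (sq_nonneg ‖T y‖), ← abs_mul]
      congr 1
      ring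
    rw [ht]
    calc |b * (s * (‖T y‖ * ‖T y‖)) - c * (|b| * ‖T y‖) * (|s| * ‖T y‖)|
        ≤ ε * (|b| * ‖T y‖) * (|s| * ‖T y‖) := h
      _ = ε * (abs b * abs s) * ‖T y‖^2 := by ring
  -- first pair: (p, q) and (p, -q)
  have k1 := key p q p (-q) (by linear_combination hp2 + hq2)
    (by linear_combination hp2 + hq2) (by linear_combination hp2 - hq2)
  -- second pair: (q, p) and (-q, p)
  have k2 := key q p (-q) p (by linear_combination hp2 + hq2)
    (by linear_combination hp2 + hq2) (by linear_combination hp2 - hq2)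
  have habs : |q * -q - c * (abs q * abs (-q))| = q^2 * (1+c) := by
    rw [abs_neg, abs_of_pos hq0]
    rw [abs_of_nonpos (by nlinarith : q * -q - c * (q*q) ≤ 0)]
    ring
  have habs2 : |p * p - c * (abs p * abs p)| = p^2 * (1-c) := by
    rw [abs_of_pos hp0, abs_of_nonneg (by nlinarith : (0:ℝ) ≤ p * p - c * (p*p))]
    ring
  rw [habs] at k1
  rw [habs2] at k2
  have e1 : 1 + c ≤ ε := by
    have hq' : abs q * abs (-q) = q^2 := by rw [abs_neg, abs_of_pos hq0]; ring
    rw [hq'] at k1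
    have ht2 : 0 < ‖T y‖^2 := by positivity
    have hq2p : 0 < q^2 := by positivity
    nlinarith [mul_pos hq2p ht2]
  have e2 : 1 - c ≤ ε := by
    have hp' : abs p * abs p = p^2 := by rw [abs_of_pos hp0]; ring
    rw [hp'] at k2
    have ht2 : 0 < ‖T y‖^2 := by positivity
    have hp2p : 0 < p^2 := by positivity
    nlinarith [mul_pos hp2p ht2]
  rcases abs_cases c with ⟨h,_⟩|⟨h,_⟩ <;> linarith


lemma diag_ineq {c ε : ℝ} (hc1 : -1 < c) (hc2 : c < 1)
    {T : H →L[ℝ] K} (hpres : AnglePres c ε T)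
    {x y : H} (hx1 : ⟪x,x⟫ = (1:ℝ)) (hy1 : ⟪y,y⟫ = (1:ℝ)) (hxy : ⟪x,y⟫ = (0:ℝ))
    (hd : ⟪T x, T y⟫ = (0:ℝ)) :
    (1-c^2) * (‖T x‖^2 - ‖T y‖^2) ≤ ε * ((1-c)*‖T x‖^2 + (1+c)*‖T y‖^2) := by
  have hyx : ⟪y,x⟫ = (0:ℝ) := by rw [real_inner_comm]; exact hxy
  have hd' : ⟪T y, T x⟫ = (0:ℝ) := by rw [real_inner_comm]; exact hd
  set a : ℝ := ‖T x‖^2 with hadef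
  set b : ℝ := ‖T y‖^2 with hbdef
  have ha : ⟪T x, T x⟫ = a := real_inner_self_eq_norm_sq (T x)
  have hb : ⟪T y, T y⟫ = b := real_inner_self_eq_norm_sq (T y)
  set p : ℝ := Real.sqrt ((1+c)/2) with hpdef
  set q : ℝ := Real.sqrt ((1-c)/2) with hqdef
  have hp2 : p^2 = (1+c)/2 := Real.sq_sqrt (by linarith)
  have hq2 : q^2 = (1-c)/2 := Real.sq_sqrt (by linarith)
  set u : H := q•x + p•y with hudef
  set v : H := (-q)•x + p•y with hvdef
  have hu1 : ‖u‖ = 1 := norm_eq_one_of (by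
    rw [hudef, inner_comb, hx1, hy1, hxy, hyx]; linear_combination hp2 + hq2)
  have hv1 : ‖v‖ = 1 := norm_eq_one_of (by
    rw [hvdef, inner_comb, hx1, hy1, hxy, hyx]; linear_combination hp2 + hq2)
  have huv : ⟪u,v⟫ = c * ‖u‖ * ‖v‖ := by
    rw [hudef, hvdef, inner_comb, hx1, hy1, hxy, hyx, hu1, hv1]
    linear_combination hp2 - hq2
  have h := hpres u v huv
  have hTu : T u = q • T x + p • T y := by simp [hudef]
  have hTv : T v = (-q) • T x + p • T y := by simp [hvdef]
  have hTuv : ⟪T u, T v⟫ = (-(1-c)/2)*a + ((1+c)/2)*b := by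
    rw [hTu, hTv, inner_comb, ha, hb, hd, hd']
    linear_combination (-a)*hq2 + b*hp2
  have hnu : ‖T u‖ * ‖T u‖ = ((1-c)/2)*a + ((1+c)/2)*b := by
    rw [← real_inner_self_eq_norm_mul_norm, hTu, inner_comb, ha, hb, hd, hd']
    linear_combination a*hq2 + b*hp2
  have hnv : ‖T v‖ * ‖T v‖ = ((1-c)/2)*a + ((1+c)/2)*b := by
    rw [← real_inner_self_eq_norm_mul_norm, hTv, inner_comb, ha, hb, hd, hd']
    linear_combination a*hq2 + b*hp2
  have hne : ‖T u‖ = ‖T v‖ :=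
    (mul_self_inj (norm_nonneg _) (norm_nonneg _)).mp (hnu.trans hnv.symm)
  have hprod : ‖T u‖ * ‖T v‖ = ((1-c)/2)*a + ((1+c)/2)*b := by
    rw [← hne]; exact hnu
  rw [hTuv, mul_assoc c, mul_assoc ε, hprod] at h
  have hlow := (abs_le.mp h).1
  linarith

lemma ratio_ineq {c ε a b : ℝ} (hc1 : -1 < c) (hc2 : c < 1) (hε0 : 0 ≤ ε)
    (hA : 0 < 1 - |c| - ε) (ha : 0 ≤ a) (hb : 0 ≤ b)
    (h : (1-c^2) * (a - b) ≤ ε * ((1-c)*a + (1+c)*b)) :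
    a * ((1+|c|)*(1-|c|-ε)) ≤ b * ((1-|c|)*(1+|c|+ε)) := by
  have h1 : a * ((1-c)*(1+c-ε)) ≤ b * ((1+c)*(1-c+ε)) := by nlinarith
  rcases le_or_gt 0 c with hc0 | hc0
  · rw [abs_of_nonneg hc0] at hA ⊢
    have hD : (0:ℝ) < (1-c)*(1+c-ε) := by nlinarith
    have key : ((1+c)*(1-c-ε)) * ((1+c)*(1-c+ε)) ≤ ((1-c)*(1+c+ε)) * ((1-c)*(1+c-ε)) := by
      nlinarith [mul_nonneg (mul_nonneg hε0 hε0) hc0]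
    have hA' : (0:ℝ) < (1+c)*(1-c-ε) := by nlinarith
    have h2 : a * ((1+c)*(1-c-ε)) * ((1-c)*(1+c-ε)) ≤ b * ((1-c)*(1+c+ε)) * ((1-c)*(1+c-ε)) := by
      calc a * ((1+c)*(1-c-ε)) * ((1-c)*(1+c-ε))
          = ((1+c)*(1-c-ε)) * (a * ((1-c)*(1+c-ε))) := by ring
        _ ≤ ((1+c)*(1-c-ε)) * (b * ((1+c)*(1-c+ε))) :=
            mul_le_mul_of_nonneg_left h1 (le_of_lt hA')
        _ = b * (((1+c)*(1-c-ε)) * ((1+c)*(1-c+ε))) := by ring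
        _ ≤ b * (((1-c)*(1+c+ε)) * ((1-c)*(1+c-ε))) :=
            mul_le_mul_of_nonneg_left key hb
        _ = b * ((1-c)*(1+c+ε)) * ((1-c)*(1+c-ε)) := by ring
    exact le_of_mul_le_mul_right h2 hD
  · rw [abs_of_neg hc0] at hA ⊢
    nlinarith



lemma pair_ineq {c ε : ℝ} (hc1 : -1 < c) (hc2 : c < 1) (hε0 : 0 ≤ ε)
    (hA : 0 < 1 - |c| - ε)
    {T : H →L[ℝ] K} (hpres : AnglePres c ε T)
    {w₁ w₂ : H} (h1 : ‖w₁‖ = 1) (h2 : ‖w₂‖ = 1) :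
    ‖T w₂‖^2 * ((1+|c|)*(1-|c|-ε)) ≤ ‖T w₁‖^2 * ((1-|c|)*(1+|c|+ε)) := by
  have hw1i : ⟪w₁,w₁⟫ = (1:ℝ) := by
    rw [real_inner_self_eq_norm_mul_norm, h1]; norm_num
  have hw2i : ⟪w₂,w₂⟫ = (1:ℝ) := by
    rw [real_inner_self_eq_norm_mul_norm, h2]; norm_num
  have hm0 : 0 ≤ |c| := abs_nonneg c
  have hm1 : |c| < 1 := abs_lt.mpr ⟨hc1, hc2⟩
  have hAB : (1+|c|)*(1-|c|-ε) ≤ (1-|c|)*(1+|c|+ε) := by nlinarith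
  have hA' : (0:ℝ) < (1+|c|)*(1-|c|-ε) := mul_pos (by linarith) hA
  have hB' : (0:ℝ) < (1-|c|)*(1+|c|+ε) := mul_pos (by linarith) (by linarith)
  obtain ⟨d₀, hd₀def⟩ : ∃ d : ℝ, d = ⟪w₁,w₂⟫ := ⟨_, rfl⟩
  by_cases hdep : w₂ - d₀ • w₁ = 0
  · have hw2 : w₂ = d₀ • w₁ := by rwa [sub_eq_zero] at hdep
    have hd1 : |d₀| = 1 := by
      have := h2
      rw [hw2, norm_smul, h1, Real.norm_eq_abs] at this
      linarith
    have hTn : ‖T w₂‖ = ‖T w₁‖ := by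
      rw [hw2, map_smul, norm_smul, Real.norm_eq_abs, hd1, one_mul]
    rw [hTn]
    exact mul_le_mul_of_nonneg_left hAB (sq_nonneg _)
  · obtain ⟨μ, hμdef⟩ : ∃ m : ℝ, m = ‖w₂ - d₀ • w₁‖ := ⟨_, rfl⟩
    have hμ0 : (0:ℝ) < μ := hμdef ▸ norm_pos_iff.mpr hdep
    obtain ⟨e₂, he₂def⟩ : ∃ e : H, e = μ⁻¹ • (w₂ - d₀ • w₁) := ⟨_, rfl⟩
    have he2u : ‖e₂‖ = 1 := by
      rw [he₂def, norm_smul, ← hμdef, Real.norm_eq_abs, abs_of_pos (inv_pos.mpr hμ0)]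
      field_simp
    have he2i : ⟪e₂,e₂⟫ = (1:ℝ) := by
      rw [real_inner_self_eq_norm_mul_norm, he2u]; norm_num
    have hw1e : ⟪w₁,e₂⟫ = (0:ℝ) := by
      rw [he₂def, real_inner_smul_right, inner_sub_right, real_inner_smul_right, hw1i,
        ← hd₀def]
      simp
    have hew1 : ⟪e₂,w₁⟫ = (0:ℝ) := by rw [real_inner_comm]; exact hw1e
    have hw2comm : ⟪w₂,w₁⟫ = d₀ := by rw [real_inner_comm]; exact hd₀def.symm
    have hμ2 : μ^2 = 1 - d₀^2 := by
      have h := real_inner_self_eq_norm_sq (w₂ - d₀ • w₁)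
      rw [inner_sub_left, inner_sub_right, inner_sub_right, real_inner_smul_left,
        real_inner_smul_left, real_inner_smul_right, real_inner_smul_right,
        hw1i, hw2i, hw2comm, ← hd₀def] at h
      rw [hμdef, ← h]
      ring
    have hw2eq : w₂ = d₀ • w₁ + μ • e₂ := by
      rw [he₂def, smul_inv_smul₀ (ne_of_gt hμ0)]
      abel
    -- IVT to diagonalize
    set g : ℝ → ℝ := fun θ =>
      ⟪T (Real.cos θ • w₁ + Real.sin θ • e₂), T ((-Real.sin θ) • w₁ + Real.cos θ • e₂)⟫
      with hgdef
    have hgc : Continuous g := by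
      apply Continuous.inner
      · exact T.continuous.comp ((Real.continuous_cos.smul continuous_const).add
          (Real.continuous_sin.smul continuous_const))
      · exact T.continuous.comp ((Real.continuous_sin.neg.smul continuous_const).add
          (Real.continuous_cos.smul continuous_const))
    have hg0 : g 0 = ⟪T w₁, T e₂⟫ := by simp [hgdef]
    have hgpi : g (Real.pi/2) = -⟪T w₁, T e₂⟫ := by
      simp [hgdef]
      rw [real_inner_comm]
    have h0mem : (0:ℝ) ∈ Set.uIcc (g 0) (g (Real.pi/2)) := by
      rw [hg0, hgpi]
      rcases le_total (0:ℝ) ⟪T w₁, T e₂⟫ with h | h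
      · exact Set.mem_uIcc.mpr (Or.inr ⟨by linarith, h⟩)
      · exact Set.mem_uIcc.mpr (Or.inl ⟨h, by linarith⟩)
    obtain ⟨θ, -, hθ⟩ := intermediate_value_uIcc hgc.continuousOn h0mem
    obtain ⟨x, hxdef⟩ : ∃ v : H, v = Real.cos θ • w₁ + Real.sin θ • e₂ := ⟨_, rfl⟩
    obtain ⟨y, hydef⟩ : ∃ v : H, v = (-Real.sin θ) • w₁ + Real.cos θ • e₂ := ⟨_, rfl⟩
    have hsc := Real.sin_sq_add_cos_sq θ
    have hx1 : ⟪x,x⟫ = (1:ℝ) := by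
      rw [hxdef, inner_comb, hw1i, he2i, hw1e, hew1]
      linear_combination hsc
    have hy1 : ⟪y,y⟫ = (1:ℝ) := by
      rw [hydef, inner_comb, hw1i, he2i, hw1e, hew1]
      linear_combination hsc
    have hxy : ⟪x,y⟫ = (0:ℝ) := by
      rw [hxdef, hydef, inner_comb, hw1i, he2i, hw1e, hew1]
      ring
    have hyx : ⟪y,x⟫ = (0:ℝ) := by rw [real_inner_comm]; exact hxy
    have hd : ⟪T x, T y⟫ = (0:ℝ) := by rw [hxdef, hydef]; exact hθ
    have hd' : ⟪T y, T x⟫ = (0:ℝ) := by rw [real_inner_comm]; exact hd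
    -- express w₁ and w₂ in the (x, y) basis
    have hw1x : w₁ = Real.cos θ • x + (-Real.sin θ) • y := by
      rw [hxdef, hydef]
      match_scalars <;> linarith [hsc]
    have he2x : e₂ = Real.sin θ • x + Real.cos θ • y := by
      rw [hxdef, hydef]
      match_scalars <;> linarith [hsc]
    obtain ⟨α, hαdef⟩ : ∃ r : ℝ, r = d₀ * Real.cos θ + μ * Real.sin θ := ⟨_, rfl⟩
    obtain ⟨β, hβdef⟩ : ∃ r : ℝ, r = -(d₀ * Real.sin θ) + μ * Real.cos θ := ⟨_, rfl⟩
    have hw2x : w₂ = α • x + β • y := by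
      rw [hw2eq, hw1x, he2x, hαdef, hβdef]
      match_scalars <;> ring
    have hαβ : α^2 + β^2 = 1 := by
      rw [hαdef, hβdef]
      linear_combination hμ2 + (d₀^2 + μ^2) * hsc
    obtain ⟨a, hadef⟩ : ∃ r : ℝ, r = ‖T x‖^2 := ⟨_, rfl⟩
    obtain ⟨b, hbdef⟩ : ∃ r : ℝ, r = ‖T y‖^2 := ⟨_, rfl⟩
    have ha : ⟪T x, T x⟫ = a := hadef ▸ real_inner_self_eq_norm_sq (T x)
    have hb : ⟪T y, T y⟫ = b := hbdef ▸ real_inner_self_eq_norm_sq (T y)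
    have ha0 : 0 ≤ a := hadef ▸ sq_nonneg _
    have hb0 : 0 ≤ b := hbdef ▸ sq_nonneg _
    have hn1 : ‖T w₁‖^2 = (Real.cos θ)^2 * a + (Real.sin θ)^2 * b := by
      rw [← real_inner_self_eq_norm_sq]
      have hT1 : T w₁ = Real.cos θ • T x + (-Real.sin θ) • T y := by
        rw [hw1x]; simp
      rw [hT1, inner_comb, ha, hb, hd, hd']; ring
    have hn2 : ‖T w₂‖^2 = α^2 * a + β^2 * b := by
      rw [← real_inner_self_eq_norm_sq]
      have hT2 : T w₂ = α • T x + β • T y := by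
        rw [hw2x]; simp
      rw [hT2, inner_comb, ha, hb, hd, hd']; ring
    -- the two ratio inequalities
    have r1 : a * ((1+|c|)*(1-|c|-ε)) ≤ b * ((1-|c|)*(1+|c|+ε)) := by
      rw [hadef, hbdef]
      exact ratio_ineq hc1 hc2 hε0 hA (sq_nonneg _) (sq_nonneg _)
        (diag_ineq hc1 hc2 hpres hx1 hy1 hxy hd)
    have r2 : b * ((1+|c|)*(1-|c|-ε)) ≤ a * ((1-|c|)*(1+|c|+ε)) := by
      rw [hadef, hbdef]
      exact ratio_ineq hc1 hc2 hε0 hA (sq_nonneg _) (sq_nonneg _)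
        (diag_ineq hc1 hc2 hpres hy1 hx1 hyx hd')
    rw [hn1, hn2]
    rcases le_total a b with hab | hab
    · have hub : α^2 * a + β^2 * b ≤ b := by
        have e1 : α^2*a ≤ α^2*b := mul_le_mul_of_nonneg_left hab (sq_nonneg α)
        have e2 : α^2*b + β^2*b = b := by linear_combination b * hαβ
        linarith
      have hlb : a ≤ (Real.cos θ)^2 * a + (Real.sin θ)^2 * b := by
        have e1 : (Real.sin θ)^2*a ≤ (Real.sin θ)^2*b :=
          mul_le_mul_of_nonneg_left hab (sq_nonneg _)
        have e2 : (Real.sin θ)^2*a + (Real.cos θ)^2*a = a := by linear_combination a * hsc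
        linarith
      calc (α^2 * a + β^2 * b) * ((1+|c|)*(1-|c|-ε))
          ≤ b * ((1+|c|)*(1-|c|-ε)) := mul_le_mul_of_nonneg_right hub (le_of_lt hA')
        _ ≤ a * ((1-|c|)*(1+|c|+ε)) := r2
        _ ≤ ((Real.cos θ)^2 * a + (Real.sin θ)^2 * b) * ((1-|c|)*(1+|c|+ε)) :=
            mul_le_mul_of_nonneg_right hlb (le_of_lt hB')
    · have hub : α^2 * a + β^2 * b ≤ a := by
        have e1 : β^2*b ≤ β^2*a := mul_le_mul_of_nonneg_left hab (sq_nonneg β)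
        have e2 : α^2*a + β^2*a = a := by linear_combination a * hαβ
        linarith
      have hlb : b ≤ (Real.cos θ)^2 * a + (Real.sin θ)^2 * b := by
        have e1 : (Real.cos θ)^2*b ≤ (Real.cos θ)^2*a :=
          mul_le_mul_of_nonneg_left hab (sq_nonneg _)
        have e2 : (Real.sin θ)^2*b + (Real.cos θ)^2*b = b := by linear_combination b * hsc
        linarith
      calc (α^2 * a + β^2 * b) * ((1+|c|)*(1-|c|-ε))
          ≤ a * ((1+|c|)*(1-|c|-ε)) := mul_le_mul_of_nonneg_right hub (le_of_lt hA')
        _ ≤ b * ((1-|c|)*(1+|c|+ε)) := r1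
        _ ≤ ((Real.cos θ)^2 * a + (Real.sin θ)^2 * b) * ((1-|c|)*(1+|c|+ε)) :=
            mul_le_mul_of_nonneg_right hlb (le_of_lt hB')



lemma lower_bound {c ε : ℝ} (hc1 : -1 < c) (hc2 : c < 1) (hε0 : 0 ≤ ε)
    (hA : 0 < 1 - |c| - ε)
    {T : H →L[ℝ] K} (hpres : AnglePres c ε T) (x : H) :
    Real.sqrt ((1 + |c|) * (1 - |c| - ε) / ((1 - |c|) * (1 + |c| + ε))) * ‖T‖ * ‖x‖ ≤ ‖T x‖ := by
  have hm0 : 0 ≤ |c| := abs_nonneg c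
  have hm1 : |c| < 1 := abs_lt.mpr ⟨hc1, hc2⟩
  have hA' : (0:ℝ) < (1+|c|)*(1-|c|-ε) := mul_pos (by linarith) hA
  have hB' : (0:ℝ) < (1-|c|)*(1+|c|+ε) := mul_pos (by linarith) (by linarith)
  by_cases hx0 : x = 0
  · simp [hx0]
  · have hxn : (0:ℝ) < ‖x‖ := norm_pos_iff.mpr hx0
    have hu : ‖(‖x‖⁻¹ • x : H)‖ = 1 := norm_smul_inv_norm hx0
    set u : H := ‖x‖⁻¹ • x with hudef
    have key : ∀ z : H, ‖T z‖ ≤ (Real.sqrt (((1-|c|)*(1+|c|+ε)) / ((1+|c|)*(1-|c|-ε))) * ‖T u‖) * ‖z‖ := by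
      intro z
      by_cases hz : z = 0
      · simp [hz]
      · have hzn : (0:ℝ) < ‖z‖ := norm_pos_iff.mpr hz
        have hzu : ‖(‖z‖⁻¹ • z : H)‖ = 1 := norm_smul_inv_norm hz
        have hp := pair_ineq hc1 hc2 hε0 hA hpres hu hzu
        have hsq : ‖T (‖z‖⁻¹ • z)‖^2 ≤ (((1-|c|)*(1+|c|+ε)) / ((1+|c|)*(1-|c|-ε))) * ‖T u‖^2 := by
          rw [div_mul_eq_mul_div, le_div_iff₀ hA']
          linarith [hp]
        have hle : ‖T (‖z‖⁻¹ • z)‖ ≤ Real.sqrt (((1-|c|)*(1+|c|+ε)) / ((1+|c|)*(1-|c|-ε))) * ‖T u‖ := by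
          have h1 : ‖T (‖z‖⁻¹ • z)‖ = Real.sqrt (‖T (‖z‖⁻¹ • z)‖^2) := (Real.sqrt_sq (norm_nonneg _)).symm
          rw [h1, ← Real.sqrt_sq (norm_nonneg (T u)), ← Real.sqrt_mul (by positivity)]
          exact Real.sqrt_le_sqrt hsq
        have hTz : T z = ‖z‖ • T (‖z‖⁻¹ • z) := by
          rw [map_smul, smul_smul, mul_inv_cancel₀ (ne_of_gt hzn), one_smul]
        rw [hTz, norm_smul, Real.norm_eq_abs, abs_of_pos hzn]
        calc ‖z‖ * ‖T (‖z‖⁻¹ • z)‖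
            ≤ ‖z‖ * (Real.sqrt (((1-|c|)*(1+|c|+ε)) / ((1+|c|)*(1-|c|-ε))) * ‖T u‖) :=
              mul_le_mul_of_nonneg_left hle (le_of_lt hzn)
          _ = (Real.sqrt (((1-|c|)*(1+|c|+ε)) / ((1+|c|)*(1-|c|-ε))) * ‖T u‖) * ‖z‖ := by ring
    have hop : ‖T‖ ≤ Real.sqrt (((1-|c|)*(1+|c|+ε)) / ((1+|c|)*(1-|c|-ε))) * ‖T u‖ :=
      T.opNorm_le_bound (by positivity) key
    have hmul : Real.sqrt ((1+|c|)*(1-|c|-ε) / ((1-|c|)*(1+|c|+ε))) *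
        Real.sqrt (((1-|c|)*(1+|c|+ε)) / ((1+|c|)*(1-|c|-ε))) = 1 := by
      rw [← Real.sqrt_mul (by positivity)]
      rw [show (1+|c|)*(1-|c|-ε) / ((1-|c|)*(1+|c|+ε)) *
          (((1-|c|)*(1+|c|+ε)) / ((1+|c|)*(1-|c|-ε))) = 1 by
        field_simp
        exact div_self (sub_pos.mpr hm1).ne']
      exact Real.sqrt_one
    have h3 : Real.sqrt ((1+|c|)*(1-|c|-ε) / ((1-|c|)*(1+|c|+ε))) * ‖T‖ ≤ ‖T u‖ := by
      calc Real.sqrt ((1+|c|)*(1-|c|-ε) / ((1-|c|)*(1+|c|+ε))) * ‖T‖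
          ≤ Real.sqrt ((1+|c|)*(1-|c|-ε) / ((1-|c|)*(1+|c|+ε))) *
            (Real.sqrt (((1-|c|)*(1+|c|+ε)) / ((1+|c|)*(1-|c|-ε))) * ‖T u‖) :=
            mul_le_mul_of_nonneg_left hop (Real.sqrt_nonneg _)
        _ = (Real.sqrt ((1+|c|)*(1-|c|-ε) / ((1-|c|)*(1+|c|+ε))) *
            Real.sqrt (((1-|c|)*(1+|c|+ε)) / ((1+|c|)*(1-|c|-ε)))) * ‖T u‖ := by ring
        _ = ‖T u‖ := by rw [hmul, one_mul]
    have hTu : ‖T u‖ = ‖x‖⁻¹ * ‖T x‖ := by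
      rw [hudef, map_smul, norm_smul, Real.norm_eq_abs, abs_of_pos (inv_pos.mpr hxn)]
    have h4 := mul_le_mul_of_nonneg_right h3 (le_of_lt hxn)
    rw [hTu] at h4
    calc Real.sqrt ((1+|c|)*(1-|c|-ε) / ((1-|c|)*(1+|c|+ε))) * ‖T‖ * ‖x‖ ≤ ‖x‖⁻¹ * ‖T x‖ * ‖x‖ := h4
      _ = ‖T x‖ := by field_simp

end Aux

theorem stmt_15 {H K : Type*} [NormedAddCommGroup H] [InnerProductSpace ℝ H] [CompleteSpace H]
    [NormedAddCommGroup K] [InnerProductSpace ℝ K] [CompleteSpace K]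
    (hH : 2 ≤ Module.rank ℝ H)
    (c : ℝ) (hc : c ∈ Set.Ioo (-1 : ℝ) 1) (ε : ℝ) (hε : ε ∈ Set.Ico 0 (1 + |c|))
    (T : H →L[ℝ] K) (hT : T ≠ 0) (hpres : AnglePres c ε T) :
    Function.Injective T ∧
      ∀ x : H,
        Real.sqrt ((1 + |c|) * (1 - |c| - ε) / ((1 - |c|) * (1 + |c| + ε))) * ‖T‖ * ‖x‖ ≤ ‖T x‖ ∧
          ‖T x‖ ≤ ‖T‖ * ‖x‖ := by
  obtain ⟨hc1, hc2⟩ := hc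
  obtain ⟨hε0, hε1⟩ := hε
  have hinj : Function.Injective T := by
    intro a b hab
    have h0 : T (a - b) = 0 := by rw [map_sub, hab, sub_self]
    exact sub_eq_zero.mp (inj_aux hc1 hc2 hε0 hε1 hT hpres h0)
  refine ⟨hinj, fun x => ⟨?_, T.le_opNorm x⟩⟩
  by_cases hA : 0 < 1 - |c| - ε
  · exact lower_bound hc1 hc2 hε0 hA hpres x
  · push_neg at hA
    have hm0 : 0 ≤ |c| := abs_nonneg c
    have hm1 : |c| < 1 := abs_lt.mpr ⟨hc1, hc2⟩
    have harg : (1 + |c|) * (1 - |c| - ε) / ((1 - |c|) * (1 + |c| + ε)) ≤ 0 := by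
      apply div_nonpos_of_nonpos_of_nonneg
      · nlinarith [mul_nonneg (by linarith : (0:ℝ) ≤ 1 + |c|) (by linarith : (0:ℝ) ≤ -(1 - |c| - ε))]
      · exact mul_nonneg (by linarith) (by linarith)
    rw [Real.sqrt_eq_zero_of_nonpos harg, zero_mul, zero_mul]
    exact norm_nonneg _
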